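/- Let A be an n×n 0-1 matrix and let k be a positive integer such that A^k is a 0-1 matrix. Then every complex eigenvalue μ of A (viewing A as a complex matrix) satisfies |μ|^k ≤ n. -/

import Mathlib

/-- A matrix over ℕ is a 0-1 matrix iff all its entries are at most 1. -/
def IsZO {α β : Type*} (A : Matrix α β ℕ) : Prop := ∀ i j, A i j ≤ 1

/-- The stable index of a 0-1 matrix: the smallest positive `k` with `A ^ (k+1)`
not a 0-1 matrix, or `⊤` if no such `k` exists. -/
noncomputable def theta {α : Type*} [Fintype α] [DecidableEq α]
    (A : Matrix α α ℕ) : ℕ∞ :=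
  sInf ((fun k : ℕ => (k : ℕ∞)) '' {k : ℕ | 1 ≤ k ∧ ¬ IsZO (A ^ (k + 1))})

/-- `g(n)` from the paper. -/
def g (n : ℕ) : ℕ :=
  if n % 2 = 1 then (n ^ 2 - 1) / 4
  else if n % 4 = 0 then (n ^ 2 - 4) / 4
  else (n ^ 2 - 16) / 4

/-- Basic circulant 0-1 matrix of order `n`. -/
def Cmat (n : ℕ) : Matrix (Fin n) (Fin n) ℕ :=
  Matrix.of fun i j => if (j : ℕ) = ((i : ℕ) + 1) % n then 1 else 0

/-- Condition (★) on `(n, p, q)`. -/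
def StarCond (n p q : ℕ) : Prop :=
  p + q = n ∧
  ((n % 2 = 1 ∧ ({p, q} : Finset ℕ) = {(n + 1) / 2, (n - 1) / 2}) ∨
   (n % 4 = 0 ∧ ({p, q} : Finset ℕ) = {(n + 2) / 2, (n - 2) / 2}) ∨
   (n % 4 = 2 ∧ ({p, q} : Finset ℕ) = {(n + 4) / 2, (n - 4) / 2}))

attribute [local instance] Matrix.linftyOpNormedRing Matrix.linftyOpNormedAlgebra

theorem stmt_12 (n : ℕ) (A : Matrix (Fin n) (Fin n) ℕ) (hA : IsZO A)
    (k : ℕ) (hk : 0 < k) (hAk : IsZO (A ^ k)) (μ : ℂ)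
    (hμ : μ ∈ spectrum ℂ (A.map (Nat.cast : ℕ → ℂ))) :
    ‖μ‖ ^ k ≤ (n : ℝ) := by
  set M := A.map (Nat.cast : ℕ → ℂ) with hM
  have hpow : μ ^ k ∈ spectrum ℂ (M ^ k) := by
    rw [spectrum.map_pow_of_pos M hk]
    exact ⟨μ, hμ, rfl⟩
  have h1 : ‖μ ^ k‖ ≤ ‖M ^ k‖ * ‖(1 : Matrix (Fin n) (Fin n) ℂ)‖ :=
    spectrum.norm_le_norm_mul_of_mem hpow
  have hMk : (M ^ k) = (A ^ k).map (Nat.cast : ℕ → ℂ) := by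
    simp only [hM]
    have : ∀ B : Matrix (Fin n) (Fin n) ℕ, B.map (Nat.cast : ℕ → ℂ)
        = (Nat.castRingHom ℂ).mapMatrix B := fun B => rfl
    rw [this, this, ← map_pow]
  have hnorm : ‖M ^ k‖ ≤ (n : ℝ) := by
    rw [hMk, Matrix.linfty_opNorm_def, show ((n:ℝ)) = ((n : NNReal) : ℝ) by simp,
      NNReal.coe_le_coe]
    apply Finset.sup_le
    intro i _
    calc (∑ j, ‖((A ^ k).map (Nat.cast : ℕ → ℂ)) i j‖₊ : NNReal)
        ≤ ∑ j : Fin n, 1 := Finset.sum_le_sum (fun j _ => by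
          simp only [Matrix.map_apply]
          have := hAk i j
          interval_cases h : (A ^ k) i j <;> simp)
      _ = n := by simp
  have hone : ‖(1 : Matrix (Fin n) (Fin n) ℂ)‖ ≤ 1 := by
    rw [← Matrix.diagonal_one, Matrix.linfty_opNorm_diagonal]
    apply pi_norm_le_iff_of_nonneg zero_le_one |>.2
    intro i; simp
  have : ‖μ‖ ^ k ≤ (n : ℝ) * 1 := by
    rw [← norm_pow]
    exact h1.trans (mul_le_mul hnorm hone (norm_nonneg _) (Nat.cast_nonneg n))
  simpa using this
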